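/- Let X be a real random variable with E[X] = 0 and E[|X|³] < ∞, let u, y ∈ ℝ, let v : ℝ → ℝ be positive and twice differentiable at u, and suppose the map ψ(x) := φ(v(u − x), y) is twice differentiable on ℝ with second derivative Lipschitz with constant L ≥ 0. Then for every ε > 0, | E[φ(v(u − εX), y)] − φ(v(u), y) · [ 1 + (ε² E[X²]/2) ( v'(u)² (y⁴ − 6 v(u) y² + 3 v(u)²)/(4 v(u)⁴) + v''(u) (y² − v(u))/(2 v(u)²) ) ] | ≤ (L/6) ε³ E[|X|³]. In particular, the density h_ε(y) = E[φ(v(u − εX), y)] equals φ(v(u), y) + (ε² E[X²]/2)(∂²_{vv}φ(v(u), y) v'(u)² + ∂_v φ(v(u), y) v''(u)) up to an error of order ε³, where ∂_v φ(v, y) = φ(v, y)(y² − v)/(2v²) and ∂²_{vv} φ(v, y) = φ(v, y)(y⁴ − 6vy² + 3v²)/(4v⁴). -/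

import Mathlib

open MeasureTheory ProbabilityTheory

/-- `φ(v, y) = (2πv)^{-1/2} e^{-y²/(2v)}`, the density of `N(0, v)`. -/
noncomputable def gaussDensity (v y : ℝ) : ℝ :=
  (Real.sqrt (2 * Real.pi * v))⁻¹ * Real.exp (-y ^ 2 / (2 * v))

open Set in
lemma grow_nonneg {g g' : ℝ → ℝ} (hg' : ∀ x, HasDerivAt g (g' x) x)
    (hg0 : g 0 = 0) {B B' : ℝ → ℝ} (hB : ∀ x, HasDerivAt B (B' x) x) (hB0 : 0 ≤ B 0)
    (hbound : ∀ s, 0 ≤ s → |g' s| ≤ B' s) {t : ℝ} (ht : 0 ≤ t) : |g t| ≤ B t := by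
  have h := image_norm_le_of_norm_deriv_right_le_deriv_boundary
    (f := g) (f' := g') (a := 0) (b := t) (B := B) (B' := B')
    (fun x _ => (hg' x).continuousAt.continuousWithinAt)
    (fun x _ => (hg' x).hasDerivWithinAt)
    (by simpa [hg0] using hB0) hB
    (fun x hx => by simpa [Real.norm_eq_abs] using hbound x hx.1)
  simpa [Real.norm_eq_abs] using h (right_mem_Icc.2 ht)

lemma taylor2_abs_nonneg {g g1 g2 : ℝ → ℝ} (hg' : ∀ x, HasDerivAt g (g1 x) x)
    (hg'' : ∀ x, HasDerivAt g1 (g2 x) x) (hg0 : g 0 = 0) (hg'0 : g1 0 = 0)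
    {L : ℝ} (hL : 0 ≤ L) (hb : ∀ s, |g2 s| ≤ L * |s|) {t : ℝ} (ht : 0 ≤ t) :
    |g t| ≤ L * t ^ 3 / 6 := by
  have hB1 : ∀ x : ℝ, HasDerivAt (fun s => L * s ^ 2 / 2) (L * x) x := by
    intro x
    have := ((hasDerivAt_pow 2 x).const_mul L).div_const 2
    refine this.congr_deriv ?_
    ring
  have h1 : ∀ s, 0 ≤ s → |g1 s| ≤ L * s ^ 2 / 2 := by
    intro s hs
    refine grow_nonneg hg'' hg'0 hB1 (by simp) (fun x hx => ?_) hs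
    calc |g2 x| ≤ L * |x| := hb x
    _ = L * x := by rw [abs_of_nonneg hx]
  have hB2 : ∀ x : ℝ, HasDerivAt (fun s => L * s ^ 3 / 6) (L * x ^ 2 / 2) x := by
    intro x
    have := ((hasDerivAt_pow 3 x).const_mul L).div_const 6
    refine this.congr_deriv ?_
    ring
  exact grow_nonneg hg' hg0 hB2 (by simp) h1 ht

lemma taylor2_lipschitz {f f' f'' : ℝ → ℝ} (hf' : ∀ x, HasDerivAt f (f' x) x)
    (hf'' : ∀ x, HasDerivAt f' (f'' x) x) {L : NNReal} (hL : LipschitzWith L f'') (t : ℝ) :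
    |f t - f 0 - f' 0 * t - f'' 0 * t ^ 2 / 2| ≤ L * |t| ^ 3 / 6 := by
  set g : ℝ → ℝ := fun s => f s - f 0 - f' 0 * s - f'' 0 * s ^ 2 / 2 with hgdef
  set g1 : ℝ → ℝ := fun s => f' s - f' 0 - f'' 0 * s with hg1def
  set g2 : ℝ → ℝ := fun s => f'' s - f'' 0 with hg2def
  have hg' : ∀ x, HasDerivAt g (g1 x) x := by
    intro x
    have h1 : HasDerivAt (fun s : ℝ => f' 0 * s) (f' 0) x := by
      simpa using (hasDerivAt_id x).const_mul (f' 0)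
    have h2 : HasDerivAt (fun s : ℝ => f'' 0 * s ^ 2 / 2) (f'' 0 * x) x := by
      have := ((hasDerivAt_pow 2 x).const_mul (f'' 0)).div_const 2
      refine this.congr_deriv ?_
      ring
    exact (((hf' x).sub_const (f 0)).sub h1).sub h2
  have hg'' : ∀ x, HasDerivAt g1 (g2 x) x := by
    intro x
    have h1 : HasDerivAt (fun s : ℝ => f'' 0 * s) (f'' 0) x := by
      simpa using (hasDerivAt_id x).const_mul (f'' 0)
    exact (((hf'' x).sub_const (f' 0)).sub h1)
  have hg0 : g 0 = 0 := by simp [hgdef]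
  have hg10 : g1 0 = 0 := by simp [hg1def]
  have hb : ∀ s, |g2 s| ≤ L * |s| := by
    intro s
    have := hL.dist_le_mul s 0
    simpa [Real.dist_eq, hg2def] using this
  have hL0 : (0 : ℝ) ≤ L := L.coe_nonneg
  rcases le_or_gt 0 t with ht | ht
  · have := taylor2_abs_nonneg hg' hg'' hg0 hg10 hL0 hb ht
    calc |f t - f 0 - f' 0 * t - f'' 0 * t ^ 2 / 2| = |g t| := by rw [hgdef]
    _ ≤ L * t ^ 3 / 6 := this
    _ = L * |t| ^ 3 / 6 := by rw [abs_of_nonneg ht]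
  · set G : ℝ → ℝ := fun s => g (-s) with hGdef
    set G1 : ℝ → ℝ := fun s => g1 (-s) * (-1) with hG1def
    set G2 : ℝ → ℝ := fun s => g2 (-s) with hG2def
    have hneg : ∀ x : ℝ, HasDerivAt (fun s : ℝ => -s) (-1 : ℝ) x := fun x => by
      exact hasDerivAt_neg x
    have hG' : ∀ x, HasDerivAt G (G1 x) x := fun x =>
      (hg' (-x)).comp x (hneg x)
    have hG'' : ∀ x, HasDerivAt G1 (G2 x) x := by
      intro x
      have h := ((hg'' (-x)).comp x (hneg x)).mul_const (-1 : ℝ)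
      refine h.congr_deriv ?_
      simp [hG2def]
    have hb2 : ∀ s, |G2 s| ≤ L * |s| := fun s => by
      simpa [hG2def] using hb (-s)
    have hG0 : G 0 = 0 := by simpa [hGdef] using hg0
    have hG10 : G1 0 = 0 := by simp [hG1def, hg10]
    have h := taylor2_abs_nonneg hG' hG'' hG0 hG10 hL0 hb2 (t := -t) (by linarith)
    have habs : |t| = -t := abs_of_neg ht
    calc |f t - f 0 - f' 0 * t - f'' 0 * t ^ 2 / 2| = |G (-t)| := by
          rw [hGdef]; simp [hgdef]
    _ ≤ L * (-t) ^ 3 / 6 := h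
    _ = L * |t| ^ 3 / 6 := by rw [habs]

lemma gauss_hasDerivAt (y : ℝ) {w : ℝ} (hw : 0 < w) :
    HasDerivAt (fun v => gaussDensity v y)
      (gaussDensity w y * ((y ^ 2 - w) / (2 * w ^ 2))) w := by
  have hpi := Real.pi_pos
  have h2w : (0:ℝ) < 2 * Real.pi * w := by positivity
  have hsq : Real.sqrt (2 * Real.pi * w) > 0 := Real.sqrt_pos.2 h2w
  have hsqsq : Real.sqrt (2 * Real.pi * w) ^ 2 = 2 * Real.pi * w :=
    Real.sq_sqrt h2w.le
  have hlin : HasDerivAt (fun v : ℝ => 2 * Real.pi * v) (2 * Real.pi) w := by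
    simpa using (hasDerivAt_id w).const_mul (2 * Real.pi)
  have hsqrt : HasDerivAt (fun v : ℝ => Real.sqrt (2 * Real.pi * v))
      (1 / (2 * Real.sqrt (2 * Real.pi * w)) * (2 * Real.pi)) w :=
    (Real.hasDerivAt_sqrt h2w.ne').comp w hlin
  have hinv : HasDerivAt (fun v : ℝ => (Real.sqrt (2 * Real.pi * v))⁻¹)
      (-(1 / (2 * Real.sqrt (2 * Real.pi * w)) * (2 * Real.pi)) /
        (Real.sqrt (2 * Real.pi * w)) ^ 2) w :=
    hsqrt.inv hsq.ne'
  have hden : HasDerivAt (fun v : ℝ => 2 * v) (2 : ℝ) w := by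
    simpa using (hasDerivAt_id w).const_mul (2 : ℝ)
  have hq : HasDerivAt (fun v : ℝ => -y ^ 2 / (2 * v))
      ((0 * (2 * w) - (-y ^ 2) * 2) / (2 * w) ^ 2) w :=
    (hasDerivAt_const w (-y ^ 2)).div hden (by positivity)
  have hexp : HasDerivAt (fun v : ℝ => Real.exp (-y ^ 2 / (2 * v)))
      (Real.exp (-y ^ 2 / (2 * w)) * ((0 * (2 * w) - (-y ^ 2) * 2) / (2 * w) ^ 2)) w :=
    hq.exp
  have h := hinv.mul hexp
  refine h.congr_deriv ?_
  unfold gaussDensity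
  set S := Real.sqrt (2 * Real.pi * w) with hS
  rw [hsqsq]
  have hπ : Real.pi ≠ 0 := Real.pi_ne_zero
  field_simp
  ring

lemma gauss_hasDerivAt2 (y : ℝ) {w : ℝ} (hw : 0 < w) :
    HasDerivAt (fun v => gaussDensity v y * ((y ^ 2 - v) / (2 * v ^ 2)))
      (gaussDensity w y * ((y ^ 4 - 6 * w * y ^ 2 + 3 * w ^ 2) / (4 * w ^ 4))) w := by
  have hnum : HasDerivAt (fun v : ℝ => y ^ 2 - v) (-1 : ℝ) w := by
    simpa using (hasDerivAt_id w).const_sub (y ^ 2)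
  have hden : HasDerivAt (fun v : ℝ => 2 * v ^ 2) (2 * (2 * w ^ 1)) w :=
    (hasDerivAt_pow 2 w).const_mul 2
  have hratio : HasDerivAt (fun v : ℝ => (y ^ 2 - v) / (2 * v ^ 2))
      (((-1) * (2 * w ^ 2) - (y ^ 2 - w) * (2 * (2 * w ^ 1))) / (2 * w ^ 2) ^ 2) w :=
    hnum.div hden (by positivity)
  have h := (gauss_hasDerivAt y hw).mul hratio
  refine h.congr_deriv ?_
  have hw' : (w : ℝ) ≠ 0 := hw.ne'
  field_simp
  ring

lemma abs_le_one_add_cube (a : ℝ) : |a| ≤ 1 + |a| ^ 3 := by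
  nlinarith [abs_nonneg a, sq_nonneg (|a| - 1),
    mul_nonneg (abs_nonneg a) (sq_nonneg (|a| - 1))]

lemma sq_le_one_add_cube (a : ℝ) : |a ^ 2| ≤ 1 + |a| ^ 3 := by
  rw [abs_pow]
  nlinarith [abs_nonneg a, sq_nonneg (|a| - 1),
    mul_nonneg (abs_nonneg a) (sq_nonneg (|a| - 1))]

/-- Small-`ε` expansion of the limiting density `h_ε(y) = E[φ(v(u − εX), y)]`,
with explicit cubic remainder.  Here `v' u` and `v'' u` are the first and second
derivatives of `v` at `u`, and the map `ψ(x) = φ(v(u − x), y)` is twice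
differentiable with `ψ''` Lipschitz with constant `L`. -/
theorem limiting_density_small_eps_expansion
    {Ω : Type*} [MeasurableSpace Ω] (P : Measure Ω) [IsProbabilityMeasure P]
    (X : Ω → ℝ) (hX_meas : Measurable X)
    (hX_mean : ∫ ω, X ω ∂P = 0)
    (hX3 : Integrable (fun ω => |X ω| ^ 3) P)
    (u y : ℝ)
    (v : ℝ → ℝ) (hv_pos : ∀ x, 0 < v x)
    (v' : ℝ → ℝ) (v'' : ℝ)
    (hv' : ∀ᶠ x in nhds u, HasDerivAt v (v' x) x)
    (hv'' : HasDerivAt v' v'' u)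
    (ψ' ψ'' : ℝ → ℝ)
    (hψ' : ∀ x : ℝ, HasDerivAt (fun x => gaussDensity (v (u - x)) y) (ψ' x) x)
    (hψ'' : ∀ x : ℝ, HasDerivAt ψ' (ψ'' x) x)
    (L : NNReal) (hψ''_lip : LipschitzWith L ψ'')
    (ε : ℝ) (hε : 0 < ε) :
    |(∫ ω, gaussDensity (v (u - ε * X ω)) y ∂P)
        - gaussDensity (v u) y *
          (1 + ε ^ 2 * (∫ ω, (X ω) ^ 2 ∂P) / 2 *
            ((v' u) ^ 2 * (y ^ 4 - 6 * v u * y ^ 2 + 3 * (v u) ^ 2) / (4 * (v u) ^ 4)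
              + v'' * (y ^ 2 - v u) / (2 * (v u) ^ 2)))|
      ≤ (L : ℝ) / 6 * ε ^ 3 * (∫ ω, |X ω| ^ 3 ∂P) := by


  set ψ : ℝ → ℝ := fun x => gaussDensity (v (u - x)) y with hψdef
  set c0 : ℝ := gaussDensity (v u) y with hc0def
  set S : ℝ := (v' u) ^ 2 * (y ^ 4 - 6 * v u * y ^ 2 + 3 * (v u) ^ 2) / (4 * (v u) ^ 4)
      + v'' * (y ^ 2 - v u) / (2 * (v u) ^ 2) with hSdef
  have hUnit : ∀ x : ℝ, HasDerivAt (fun s : ℝ => u - s) (-1 : ℝ) x := fun x => by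
    simpa using (hasDerivAt_id x).const_sub u
  -- the eventual formula for ψ'
  have hmem : ∀ᶠ x in nhds (0 : ℝ), HasDerivAt v (v' (u - x)) (u - x) := by
    have hcont : Continuous (fun x : ℝ => u - x) := by continuity
    have htend : Filter.Tendsto (fun x : ℝ => u - x) (nhds 0) (nhds u) := by
      simpa using hcont.tendsto 0
    exact htend.eventually hv'
  have hψ'eq : ψ' =ᶠ[nhds (0 : ℝ)] fun x =>
      gaussDensity (v (u - x)) y * ((y ^ 2 - v (u - x)) / (2 * (v (u - x)) ^ 2))
        * (v' (u - x) * (-1)) := by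
    filter_upwards [hmem] with x hx
    have hin : HasDerivAt (fun s : ℝ => v (u - s)) (v' (u - x) * (-1)) x :=
      hx.comp x (hUnit x)
    have hout := (gauss_hasDerivAt y (hv_pos (u - x))).comp x hin
    exact (hψ' x).unique hout
  -- second derivative at 0
  have hin0 : HasDerivAt (fun s : ℝ => v (u - s)) (v' (u - 0) * (-1)) 0 := by
    have hvu : HasDerivAt v (v' (u - 0)) (u - 0) := by
      rw [sub_zero]; exact hv'.self_of_nhds
    exact hvu.comp 0 (hUnit 0)
  have hG0 : HasDerivAt
      (fun x : ℝ => gaussDensity (v (u - x)) y * ((y ^ 2 - v (u - x)) / (2 * (v (u - x)) ^ 2)))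
      (gaussDensity (v (u - 0)) y *
        ((y ^ 4 - 6 * v (u - 0) * y ^ 2 + 3 * (v (u - 0)) ^ 2) / (4 * (v (u - 0)) ^ 4))
        * (v' (u - 0) * (-1))) 0 :=
    (gauss_hasDerivAt2 y (hv_pos (u - 0))).comp (h₂ := fun w => gaussDensity w y * ((y ^ 2 - w) / (2 * w ^ 2))) 0 hin0
  have hH0 : HasDerivAt (fun x : ℝ => v' (u - x)) (v'' * (-1)) 0 := by
    have hvu : HasDerivAt v' v'' (u - 0) := by rw [sub_zero]; exact hv''
    exact hvu.comp 0 (hUnit 0)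
  have hF : HasDerivAt (fun x : ℝ =>
      gaussDensity (v (u - x)) y * ((y ^ 2 - v (u - x)) / (2 * (v (u - x)) ^ 2))
        * (v' (u - x) * (-1)))
      (gaussDensity (v (u - 0)) y *
        ((y ^ 4 - 6 * v (u - 0) * y ^ 2 + 3 * (v (u - 0)) ^ 2) / (4 * (v (u - 0)) ^ 4))
        * (v' (u - 0) * (-1)) * (v' (u - 0) * (-1))
        + gaussDensity (v (u - 0)) y * ((y ^ 2 - v (u - 0)) / (2 * (v (u - 0)) ^ 2))
          * (v'' * (-1) * (-1))) 0 :=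
    hG0.mul (hH0.mul_const (-1))
  have hψ'0 : HasDerivAt ψ' _ 0 := hF.congr_of_eventuallyEq hψ'eq
  have hc2 : ψ'' 0 = c0 * S := by
    have h := (hψ'' 0).unique hψ'0
    rw [h, hSdef, hc0def]
    rw [sub_zero]
    ring
  -- pointwise Taylor bound
  have hψ0 : ψ 0 = c0 := by
    show gaussDensity (v (u - 0)) y = c0
    rw [sub_zero, hc0def]
  set c1 : ℝ := ψ' 0 with hc1def
  set c2 : ℝ := ψ'' 0 with hc2def
  set r : Ω → ℝ := fun ω =>
    ψ (ε * X ω) - (c0 + c1 * ε * X ω + c2 * ε ^ 2 / 2 * X ω ^ 2) with hrdef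
  have hrb : ∀ ω, |r ω| ≤ (L : ℝ) / 6 * ε ^ 3 * |X ω| ^ 3 := by
    intro ω
    have h := taylor2_lipschitz hψ' hψ'' hψ''_lip (ε * X ω)
    have habs : |ε * X ω| ^ 3 = ε ^ 3 * |X ω| ^ 3 := by
      rw [abs_mul, mul_pow, abs_of_pos hε]
    have h1 : |r ω| = |ψ (ε * X ω) - ψ 0 - ψ' 0 * (ε * X ω) - ψ'' 0 * (ε * X ω) ^ 2 / 2| := by
      rw [hrdef, hψ0]
      congr 1
      rw [← hc1def, ← hc2def]
      ring
    rw [h1]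
    calc |ψ (ε * X ω) - ψ 0 - ψ' 0 * (ε * X ω) - ψ'' 0 * (ε * X ω) ^ 2 / 2|
        ≤ (L : ℝ) * |ε * X ω| ^ 3 / 6 := h
    _ = (L : ℝ) / 6 * ε ^ 3 * |X ω| ^ 3 := by rw [habs]; ring
  -- measurability / integrability
  have hψcont : Continuous ψ := by
    have : Differentiable ℝ ψ := fun x => (hψ' x).differentiableAt
    exact this.continuous
  have hmX : Measurable fun ω => ε * X ω := hX_meas.const_mul ε
  have hmr : Measurable r := by
    apply Measurable.sub (hψcont.measurable.comp hmX)
    apply Measurable.add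
    · exact measurable_const.add ((hX_meas.const_mul (c1 * ε)))
    · exact (hX_meas.pow_const 2).const_mul (c2 * ε ^ 2 / 2)
  have hb_int : Integrable (fun ω => 1 + |X ω| ^ 3) P := (integrable_const 1).add hX3
  have hX1 : Integrable X P := by
    refine hb_int.mono' hX_meas.aestronglyMeasurable (Filter.Eventually.of_forall fun ω => ?_)
    simpa [Real.norm_eq_abs] using abs_le_one_add_cube (X ω)
  have hX2 : Integrable (fun ω => X ω ^ 2) P := by
    refine hb_int.mono' (hX_meas.pow_const 2).aestronglyMeasurable
      (Filter.Eventually.of_forall fun ω => ?_)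
    simpa [Real.norm_eq_abs] using sq_le_one_add_cube (X ω)
  have hr_int : Integrable r P := by
    refine (hX3.const_mul ((L : ℝ) / 6 * ε ^ 3)).mono' hmr.aestronglyMeasurable
      (Filter.Eventually.of_forall fun ω => ?_)
    simpa [Real.norm_eq_abs] using hrb ω
  have hlin_int : Integrable (fun ω => c0 + c1 * ε * X ω) P :=
    (integrable_const c0).add (hX1.const_mul (c1 * ε))
  have hquad_int : Integrable (fun ω => c2 * ε ^ 2 / 2 * X ω ^ 2) P :=
    hX2.const_mul (c2 * ε ^ 2 / 2)
  have haff_int : Integrable (fun ω => c0 + c1 * ε * X ω + c2 * ε ^ 2 / 2 * X ω ^ 2) P :=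
    hlin_int.add hquad_int
  -- integral computation
  have hI : (∫ ω, gaussDensity (v (u - ε * X ω)) y ∂P)
      = (∫ ω, r ω ∂P) + (c0 + c2 * ε ^ 2 / 2 * (∫ ω, X ω ^ 2 ∂P)) := by
    have hfun : (fun ω => gaussDensity (v (u - ε * X ω)) y)
        = fun ω => r ω + (c0 + c1 * ε * X ω + c2 * ε ^ 2 / 2 * X ω ^ 2) := by
      funext ω
      rw [hrdef]
      ring
    rw [hfun, integral_add hr_int haff_int, integral_add hlin_int hquad_int,
      integral_add (integrable_const c0) (hX1.const_mul (c1 * ε)),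
      integral_const, integral_const_mul, integral_const_mul, hX_mean]
    simp
  have hEq : (∫ ω, gaussDensity (v (u - ε * X ω)) y ∂P)
      - gaussDensity (v u) y * (1 + ε ^ 2 * (∫ ω, X ω ^ 2 ∂P) / 2 * S)
      = ∫ ω, r ω ∂P := by
    rw [hI, hc2, ← hc0def]
    ring
  rw [hEq]
  calc |∫ ω, r ω ∂P| ≤ ∫ ω, |r ω| ∂P := by
        simpa [Real.norm_eq_abs] using norm_integral_le_integral_norm (μ := P) r
  _ ≤ ∫ ω, (L : ℝ) / 6 * ε ^ 3 * |X ω| ^ 3 ∂P :=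
      integral_mono hr_int.abs (hX3.const_mul ((L : ℝ) / 6 * ε ^ 3)) hrb
  _ = (L : ℝ) / 6 * ε ^ 3 * (∫ ω, |X ω| ^ 3 ∂P) := integral_const_mul _ _
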